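/- In the network model, for every scheduling variable U with U k f ∈ {0,1}, every beamformer collection V, and every Γ : 𝓚 → 𝓕 → ℝ with Γ k f > −1 for all k, f, one has f_r(U, V, Γ) ≤ f_0(U, V), with equality if and only if Γ k f = γ_{k,f}(U,V) for every k and f. -/

import Mathlib

open scoped BigOperators

variable {𝓑 𝓕 𝓚 : Type*}

/-- Signal power `S_{k,f}(U,V) = U k f · |⟪h k (β k) f, V k f⟫|²`. -/
noncomputable def sigPow {M : ℕ} (β : 𝓚 → 𝓑)
    (h : 𝓚 → 𝓑 → 𝓕 → EuclideanSpace ℂ (Fin M))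
    (U : 𝓚 → 𝓕 → ℝ) (V : 𝓚 → 𝓕 → EuclideanSpace ℂ (Fin M)) (k : 𝓚) (f : 𝓕) : ℝ :=
  U k f * ‖(inner ℂ (h k (β k) f) (V k f) : ℂ)‖ ^ 2

/-- Interference-plus-noise power
`I_{k,f}(U,V) = ∑_{k' ≠ k} U k' f · |⟪h k (β k') f, V k' f⟫|² + (σ k f)²`. -/
noncomputable def intPow {M : ℕ} [Fintype 𝓚] [DecidableEq 𝓚] (β : 𝓚 → 𝓑)
    (h : 𝓚 → 𝓑 → 𝓕 → EuclideanSpace ℂ (Fin M)) (σ : 𝓚 → 𝓕 → ℝ)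
    (U : 𝓚 → 𝓕 → ℝ) (V : 𝓚 → 𝓕 → EuclideanSpace ℂ (Fin M)) (k : 𝓚) (f : 𝓕) : ℝ :=
  (∑ k' ∈ Finset.univ.erase k,
      U k' f * ‖(inner ℂ (h k (β k') f) (V k' f) : ℂ)‖ ^ 2) + (σ k f) ^ 2

/-- SINR `γ_{k,f}(U,V) = S_{k,f}(U,V) / I_{k,f}(U,V)`. -/
noncomputable def sinr {M : ℕ} [Fintype 𝓚] [DecidableEq 𝓚] (β : 𝓚 → 𝓑)
    (h : 𝓚 → 𝓑 → 𝓕 → EuclideanSpace ℂ (Fin M)) (σ : 𝓚 → 𝓕 → ℝ)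
    (U : 𝓚 → 𝓕 → ℝ) (V : 𝓚 → 𝓕 → EuclideanSpace ℂ (Fin M)) (k : 𝓚) (f : 𝓕) : ℝ :=
  sigPow β h U V k f / intPow β h σ U V k f

/-- Weighted sum rate `f₀(U,V) = ∑_{k,f} w k · log(1 + γ_{k,f}(U,V))`. -/
noncomputable def f0 {M : ℕ} [Fintype 𝓚] [DecidableEq 𝓚] [Fintype 𝓕] (β : 𝓚 → 𝓑)
    (h : 𝓚 → 𝓑 → 𝓕 → EuclideanSpace ℂ (Fin M)) (w : 𝓚 → ℝ) (σ : 𝓚 → 𝓕 → ℝ)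
    (U : 𝓚 → 𝓕 → ℝ) (V : 𝓚 → 𝓕 → EuclideanSpace ℂ (Fin M)) : ℝ :=
  ∑ k, ∑ f, w k * Real.log (1 + sinr β h σ U V k f)

/-- Lagrangian-dual-transform objective `f_r(U,V,Γ)`. -/
noncomputable def fr {M : ℕ} [Fintype 𝓚] [DecidableEq 𝓚] [Fintype 𝓕] (β : 𝓚 → 𝓑)
    (h : 𝓚 → 𝓑 → 𝓕 → EuclideanSpace ℂ (Fin M)) (w : 𝓚 → ℝ) (σ : 𝓚 → 𝓕 → ℝ)
    (U : 𝓚 → 𝓕 → ℝ) (V : 𝓚 → 𝓕 → EuclideanSpace ℂ (Fin M)) (Γ : 𝓚 → 𝓕 → ℝ) : ℝ :=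
  ∑ k, ∑ f,
    (w k * Real.log (1 + Γ k f) - w k * Γ k f +
      w k * (1 + Γ k f) * sigPow β h U V k f /
        (sigPow β h U V k f + intPow β h σ U V k f))

/-- Quadratic-transform objective `f_q(U,V,Γ,Y)`. -/
noncomputable def fq {M : ℕ} [Fintype 𝓚] [DecidableEq 𝓚] [Fintype 𝓕] (β : 𝓚 → 𝓑)
    (h : 𝓚 → 𝓑 → 𝓕 → EuclideanSpace ℂ (Fin M)) (w : 𝓚 → ℝ) (σ : 𝓚 → 𝓕 → ℝ)
    (U : 𝓚 → 𝓕 → ℝ) (V : 𝓚 → 𝓕 → EuclideanSpace ℂ (Fin M)) (Γ : 𝓚 → 𝓕 → ℝ)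
    (Y : 𝓚 → 𝓕 → ℂ) : ℝ :=
  ∑ k, ∑ f,
    (w k * (Real.log (1 + Γ k f) - Γ k f) +
      2 * ((starRingEnd ℂ) (Y k f) *
        (((Real.sqrt (w k * (1 + Γ k f)) * U k f : ℝ) : ℂ) *
          (inner ℂ (V k f) (h k (β k) f) : ℂ))).re -
      ‖Y k f‖ ^ 2 * (sigPow β h U V k f + intPow β h σ U V k f))

private lemma log_key (γ Γ : ℝ) (hγ : 0 ≤ γ) (hΓ : -1 < Γ) :
    Real.log (1 + Γ) - Γ + (1 + Γ) * γ / (1 + γ) ≤ Real.log (1 + γ) ∧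
    (Real.log (1 + Γ) - Γ + (1 + Γ) * γ / (1 + γ) = Real.log (1 + γ) ↔ Γ = γ) := by
  have h1γ : 0 < 1 + γ := by linarith
  have h1Γ : 0 < 1 + Γ := by linarith
  set x := (1 + Γ) / (1 + γ) with hxdef
  have hx : 0 < x := div_pos h1Γ h1γ
  have hlog : Real.log x = Real.log (1 + Γ) - Real.log (1 + γ) :=
    Real.log_div h1Γ.ne' h1γ.ne'
  have hdiff : Real.log (1 + Γ) - Γ + (1 + Γ) * γ / (1 + γ) - Real.log (1 + γ)
      = Real.log x - (x - 1) := by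
    rw [hlog, hxdef]; field_simp; ring
  have hle := Real.log_le_sub_one_of_pos hx
  refine ⟨by linarith, ?_, ?_⟩
  · intro he
    by_contra hne
    have hx1 : x ≠ 1 := by
      intro h1
      exact hne (by have := (div_eq_one_iff_eq h1γ.ne').1 h1; linarith)
    have := Real.log_lt_sub_one_of_pos hx hx1
    rw [he] at hdiff
    linarith
  · intro he; subst he
    have hx1 : x = 1 := div_self h1Γ.ne'
    rw [hx1] at hdiff
    simp at hdiff
    linarith

private lemma term_key (S I Γ w : ℝ) (hS : 0 ≤ S) (hI : 0 < I) (hΓ : -1 < Γ)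
    (hw : 0 < w) :
    w * Real.log (1 + Γ) - w * Γ + w * (1 + Γ) * S / (S + I) ≤
      w * Real.log (1 + S / I) ∧
    (w * Real.log (1 + Γ) - w * Γ + w * (1 + Γ) * S / (S + I) =
      w * Real.log (1 + S / I) ↔ Γ = S / I) := by
  set γ := S / I with hγdef
  have hγ : 0 ≤ γ := div_nonneg hS hI.le
  have hSI : 0 < S + I := by linarith
  have h1γ : 0 < 1 + γ := by linarith
  have hconv : S / (S + I) = γ / (1 + γ) := by
    rw [hγdef]
    field_simp
    ring
  have heq : w * Real.log (1 + Γ) - w * Γ + w * (1 + Γ) * S / (S + I)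
      = w * (Real.log (1 + Γ) - Γ + (1 + Γ) * γ / (1 + γ)) := by
    rw [mul_div_assoc, hconv]
    ring
  obtain ⟨hle, hiff⟩ := log_key γ Γ hγ hΓ
  rw [heq]
  constructor
  · exact mul_le_mul_of_nonneg_left hle hw.le
  · constructor
    · intro he
      exact hiff.1 (mul_left_cancel₀ hw.ne' he)
    · intro he
      rw [hiff.2 he]

private lemma sigPow_nonneg {M : ℕ} (β : 𝓚 → 𝓑)
    (h : 𝓚 → 𝓑 → 𝓕 → EuclideanSpace ℂ (Fin M))
    (U : 𝓚 → 𝓕 → ℝ) (hU : ∀ k f, U k f = 0 ∨ U k f = 1)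
    (V : 𝓚 → 𝓕 → EuclideanSpace ℂ (Fin M)) (k : 𝓚) (f : 𝓕) :
    0 ≤ sigPow β h U V k f := by
  unfold sigPow
  rcases hU k f with h0 | h1
  · rw [h0]; simp
  · rw [h1]; positivity

private lemma intPow_pos {M : ℕ} [Fintype 𝓚] [DecidableEq 𝓚] (β : 𝓚 → 𝓑)
    (h : 𝓚 → 𝓑 → 𝓕 → EuclideanSpace ℂ (Fin M)) (σ : 𝓚 → 𝓕 → ℝ)
    (hσ : ∀ k f, 0 < σ k f)
    (U : 𝓚 → 𝓕 → ℝ) (hU : ∀ k f, U k f = 0 ∨ U k f = 1)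
    (V : 𝓚 → 𝓕 → EuclideanSpace ℂ (Fin M)) (k : 𝓚) (f : 𝓕) :
    0 < intPow β h σ U V k f := by
  unfold intPow
  have h1 : 0 ≤ ∑ k' ∈ Finset.univ.erase k,
      U k' f * ‖(inner ℂ (h k (β k') f) (V k' f) : ℂ)‖ ^ 2 := by
    apply Finset.sum_nonneg
    intro k' _
    rcases hU k' f with h0 | h1
    · rw [h0]; simp
    · rw [h1]; positivity
  have h2 : 0 < (σ k f) ^ 2 := pow_pos (hσ k f) 2
  linarith

/-- Lagrangian dual transform bound in the network model: for binary scheduling `U`,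
any beamformers `V`, and any `Γ` with `Γ k f > −1`, one has `f_r(U,V,Γ) ≤ f₀(U,V)`,
with equality iff `Γ k f = γ_{k,f}(U,V)` for all `k, f`. -/
theorem fr_le_f0 {M : ℕ} [Fintype 𝓚] [DecidableEq 𝓚] [Fintype 𝓕]
    (β : 𝓚 → 𝓑) (h : 𝓚 → 𝓑 → 𝓕 → EuclideanSpace ℂ (Fin M))
    (w : 𝓚 → ℝ) (σ : 𝓚 → 𝓕 → ℝ) (hw : ∀ k, 0 < w k) (hσ : ∀ k f, 0 < σ k f)
    (U : 𝓚 → 𝓕 → ℝ) (hU : ∀ k f, U k f = 0 ∨ U k f = 1)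
    (V : 𝓚 → 𝓕 → EuclideanSpace ℂ (Fin M))
    (Γ : 𝓚 → 𝓕 → ℝ) (hΓ : ∀ k f, -1 < Γ k f) :
    fr β h w σ U V Γ ≤ f0 β h w σ U V ∧
      (fr β h w σ U V Γ = f0 β h w σ U V ↔ ∀ k f, Γ k f = sinr β h σ U V k f) := by
  have key : ∀ k f,
      (w k * Real.log (1 + Γ k f) - w k * Γ k f +
        w k * (1 + Γ k f) * sigPow β h U V k f /
          (sigPow β h U V k f + intPow β h σ U V k f) ≤
        w k * Real.log (1 + sinr β h σ U V k f)) ∧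
      (w k * Real.log (1 + Γ k f) - w k * Γ k f +
        w k * (1 + Γ k f) * sigPow β h U V k f /
          (sigPow β h U V k f + intPow β h σ U V k f) =
        w k * Real.log (1 + sinr β h σ U V k f) ↔ Γ k f = sinr β h σ U V k f) := by
    intro k f
    have := term_key (sigPow β h U V k f) (intPow β h σ U V k f) (Γ k f) (w k)
      (sigPow_nonneg β h U hU V k f) (intPow_pos β h σ hσ U hU V k f)
      (hΓ k f) (hw k)
    simpa [sinr] using this
  have hinner : ∀ k, (∑ f, (w k * Real.log (1 + Γ k f) - w k * Γ k f +
        w k * (1 + Γ k f) * sigPow β h U V k f /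
          (sigPow β h U V k f + intPow β h σ U V k f))) ≤
      ∑ f, w k * Real.log (1 + sinr β h σ U V k f) := by
    intro k
    exact Finset.sum_le_sum fun f _ => (key k f).1
  have hle : fr β h w σ U V Γ ≤ f0 β h w σ U V :=
    Finset.sum_le_sum fun k _ => hinner k
  refine ⟨hle, ?_⟩
  unfold fr f0
  rw [Finset.sum_eq_sum_iff_of_le fun k _ => hinner k]
  constructor
  · intro he k f
    have := (Finset.sum_eq_sum_iff_of_le fun f (_ : f ∈ Finset.univ) => (key k f).1).1
      (he k (Finset.mem_univ k)) f (Finset.mem_univ f)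
    exact (key k f).2.1 this
  · intro he k _
    apply Finset.sum_congr rfl
    intro f _
    exact (key k f).2.2 (he k f)
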